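/- arXiv:2306.15781 — 2 statements merged into one kernel-verified Lean document; each statement's English description precedes it below -/
import Mathlib

section
/- With Q_∞ := ∫₀^∞ e^{Ct} Q e^{C*t} dt, the integration-by-parts identity (-C)^{-1} Q_∞ = (-C)^{-1} Q ((-C)^{-1})^* − Q_∞ ((-C)^{-1})^* holds, and hence the symmetric part Sym((-C)^{-1} Q_∞) := (1/2)[(-C)^{-1} Q_∞ + Q_∞ ((-C)^{-1})^*] equals (1/2)(-C)^{-1} Q ((-C)^{-1})^*. -/
set_option synthInstance.maxHeartbeats 1000000
set_option maxHeartbeats 2000000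

open MeasureTheory ContinuousLinearMap
open scoped RealInnerProductSpace

/-- With `Q_∞ = ∫₀^∞ e^{Ct} Q (e^{Ct})^* dt`, integration by parts gives
`(-C)⁻¹ Q_∞ = (-C)⁻¹ Q ((-C)⁻¹)^* − Q_∞ ((-C)⁻¹)^*`, hence the symmetric part of
`(-C)⁻¹ Q_∞` equals `(1/2)(-C)⁻¹ Q ((-C)⁻¹)^*`. -/
theorem stmt1
    {H : Type*} [NormedAddCommGroup H] [InnerProductSpace ℝ H] [CompleteSpace H]
    (C Q : H →L[ℝ] H)
    (hQsym : ContinuousLinearMap.adjoint Q = Q)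
    (hQpos : ∀ x : H, 0 ≤ ⟪Q x, x⟫)
    (S : ℝ → H →L[ℝ] H)
    (hS0 : S 0 = 1)
    (hSadd : ∀ s t : ℝ, 0 ≤ s → 0 ≤ t → S (s + t) = S s ∘L S t)
    (hScont : ∀ x : H, Continuous fun t : ℝ => S t x)
    (hgen : ∀ (x : H) (t : ℝ), 0 < t → HasDerivAt (fun s : ℝ => S s x) (C (S t x)) t)
    (ι M₀ : ℝ) (hι : 0 < ι) (hM₀ : 0 < M₀)
    (hdecay : ∀ t : ℝ, 0 ≤ t → ‖S t‖ ≤ M₀ * Real.exp (-ι * t))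
    (Cinv : H →L[ℝ] H)
    (hCinv1 : (-C) ∘L Cinv = 1) (hCinv2 : Cinv ∘L (-C) = 1)
    (Qinf : H →L[ℝ] H)
    (hQinf : ∀ x : H,
      Qinf x = ∫ t in Set.Ioi (0 : ℝ), S t (Q ((ContinuousLinearMap.adjoint (S t)) x))) :
    Cinv ∘L Qinf
        = (Cinv ∘L Q) ∘L ContinuousLinearMap.adjoint Cinv
          - Qinf ∘L ContinuousLinearMap.adjoint Cinv ∧
      (1 / 2 : ℝ) • (Cinv ∘L Qinf + Qinf ∘L ContinuousLinearMap.adjoint Cinv)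
        = (1 / 2 : ℝ) • ((Cinv ∘L Q) ∘L ContinuousLinearMap.adjoint Cinv) := by
  classical
  letI : NormedAlgebra ℚ (H →L[ℝ] H) := .restrictScalars ℚ ℝ _
  -- Step 1 : `S t = exp (t • C)` for `t ≥ 0`.
  have hSexp : ∀ t : ℝ, 0 ≤ t → S t = NormedSpace.exp (t • C) := by
    have hinv : ∀ t : ℝ, ∀ z : H,
        NormedSpace.exp (t • C) (NormedSpace.exp (-(t • C)) z) = z := by
      intro t z
      have h : NormedSpace.exp (t • C) * NormedSpace.exp (-(t • C)) = 1 := by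
        rw [← NormedSpace.exp_add_of_commute ((Commute.refl (t • C)).neg_right)]
        simp
      have := congrArg (fun (T : H →L[ℝ] H) => T z) h
      simpa [ContinuousLinearMap.mul_apply] using this
    intro t ht
    ext x
    set g : ℝ → H := fun u => NormedSpace.exp (-(u • C)) (S u x) with hgdef
    have hgc : Continuous g := by
      have h1 : Continuous fun u : ℝ => NormedSpace.exp (-(u • C)) :=
        NormedSpace.exp_continuous.comp (by fun_prop)
      exact h1.clm_apply (hScont x)
    have hgd : ∀ u : ℝ, 0 < u → HasDerivAt g 0 u := by
      intro u hu
      have h1 : HasDerivAt (fun v : ℝ => NormedSpace.exp (v • C))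
          (C * NormedSpace.exp ((-u) • C)) (-u) :=
        hasDerivAt_exp_smul_const' C (-u)
      have h2 : HasDerivAt (fun v : ℝ => NormedSpace.exp (-(v • C)))
          (-(C * NormedSpace.exp (-(u • C)))) u := by
        have := h1.scomp u (hasDerivAt_neg u)
        simp only [Function.comp_def, neg_smul] at this ⊢
        exact this.congr_deriv (by simp)
      have h3 := h2.clm_apply (hgen x u hu)
      have hcomm : (C * NormedSpace.exp (-(u • C))) (S u x)
          = NormedSpace.exp (-(u • C)) (C (S u x)) := by
        have h := (((Commute.refl C).smul_right u).neg_right.exp_right).eq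
        have := congrArg (fun (T : H →L[ℝ] H) => T (S u x)) h
        simpa [ContinuousLinearMap.mul_apply] using this
      convert h3 using 1
      simp [hcomm]
    have hg0 : g 0 = x := by simp [hgdef, hS0]
    have hgt : g t = x := by
      rcases ht.eq_or_lt with rfl | htpos
      · exact hg0
      · have hconst : ∀ s : ℝ, 0 < s → s ≤ t → g t = g s := by
          intro s hs hst
          have := constant_of_has_deriv_right_zero (f := g) (a := s) (b := t)
            (hgc.continuousOn) (fun y hy => ((hgd y (lt_of_lt_of_le hs hy.1)).hasDerivWithinAt))
          exact this t ⟨hst, le_refl t⟩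
        have h1 : Filter.Tendsto g (nhdsWithin 0 (Set.Ioi 0)) (nhds (g 0)) :=
          (hgc.tendsto 0).mono_left nhdsWithin_le_nhds
        have h2 : Filter.Tendsto g (nhdsWithin 0 (Set.Ioi 0)) (nhds (g t)) := by
          apply Filter.Tendsto.congr' _ tendsto_const_nhds
          filter_upwards [Ioc_mem_nhdsGT_of_mem ⟨le_refl (0 : ℝ), htpos⟩] with s hs
          exact hconst s hs.1 hs.2
        rw [tendsto_nhds_unique h2 h1, hg0]
    have := congrArg (fun z => NormedSpace.exp (t • C) z) hgt
    simpa [hgdef, hinv t] using this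
  -- Notation
  set A := ContinuousLinearMap.adjoint C with hA
  have hexp_adj : ∀ t : ℝ,
      ContinuousLinearMap.adjoint (NormedSpace.exp (t • C)) = NormedSpace.exp (t • A) := by
    intro t
    rw [hA, ← ContinuousLinearMap.star_eq_adjoint, ← ContinuousLinearMap.star_eq_adjoint,
      NormedSpace.star_exp]
    congr 1
    simp
  have hnormA : ∀ t : ℝ, 0 ≤ t → ‖NormedSpace.exp (t • A)‖ ≤ M₀ * Real.exp (-ι * t) := by
    intro t ht
    rw [← hexp_adj, ← hSexp t ht,
      LinearIsometryEquiv.norm_map ContinuousLinearMap.adjoint (S t)]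
    exact hdecay t ht
  have hnormC : ∀ t : ℝ, 0 ≤ t → ‖NormedSpace.exp (t • C)‖ ≤ M₀ * Real.exp (-ι * t) := by
    intro t ht
    rw [← hSexp t ht]; exact hdecay t ht
  set F : H → H → ℝ → ℝ :=
    fun a b t => ⟪Q (NormedSpace.exp (t • A) a), NormedSpace.exp (t • A) b⟫ with hF
  have hexpcont : Continuous fun t : ℝ => NormedSpace.exp (t • A) :=
    NormedSpace.exp_continuous.comp (by fun_prop)
  have hFcont : ∀ a b : H, Continuous (F a b) := by
    intro a b
    apply Continuous.inner
    · exact Q.continuous.comp (hexpcont.clm_apply continuous_const)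
    · exact hexpcont.clm_apply continuous_const
  have hexptwo : ∀ t : ℝ, Real.exp (-ι * t) * Real.exp (-ι * t) = Real.exp (-(2 * ι) * t) := by
    intro t; rw [← Real.exp_add]; ring_nf
  have hFbound : ∀ a b : H, ∀ t : ℝ, 0 ≤ t →
      |F a b t| ≤ M₀ * M₀ * ‖Q‖ * (‖a‖ * ‖b‖) * Real.exp (-(2 * ι) * t) := by
    intro a b t ht
    have hu : ‖NormedSpace.exp (t • A) a‖ ≤ M₀ * Real.exp (-ι * t) * ‖a‖ :=
      ((NormedSpace.exp (t • A)).le_opNorm a).trans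
        (mul_le_mul_of_nonneg_right (hnormA t ht) (norm_nonneg a))
    have hv : ‖NormedSpace.exp (t • A) b‖ ≤ M₀ * Real.exp (-ι * t) * ‖b‖ :=
      ((NormedSpace.exp (t • A)).le_opNorm b).trans
        (mul_le_mul_of_nonneg_right (hnormA t ht) (norm_nonneg b))
    calc |F a b t| ≤ ‖Q (NormedSpace.exp (t • A) a)‖ * ‖NormedSpace.exp (t • A) b‖ :=
          abs_real_inner_le_norm _ _
      _ ≤ (‖Q‖ * (M₀ * Real.exp (-ι * t) * ‖a‖)) * (M₀ * Real.exp (-ι * t) * ‖b‖) := by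
          apply mul_le_mul _ hv (norm_nonneg _) (by positivity)
          exact (Q.le_opNorm _).trans (mul_le_mul_of_nonneg_left hu (norm_nonneg Q))
      _ = M₀ * M₀ * ‖Q‖ * (‖a‖ * ‖b‖) * (Real.exp (-ι * t) * Real.exp (-ι * t)) := by ring
      _ = M₀ * M₀ * ‖Q‖ * (‖a‖ * ‖b‖) * Real.exp (-(2 * ι) * t) := by rw [hexptwo t]
  have hexpint : IntegrableOn (fun t : ℝ => Real.exp (-(2 * ι) * t)) (Set.Ioi 0) :=
    exp_neg_integrableOn_Ioi 0 (by positivity)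
  have hFint : ∀ a b : H, IntegrableOn (F a b) (Set.Ioi 0) := by
    intro a b
    apply Integrable.mono' ((hexpint.const_mul (M₀ * M₀ * ‖Q‖ * (‖a‖ * ‖b‖))))
      ((hFcont a b).aestronglyMeasurable.restrict)
    filter_upwards [ae_restrict_mem measurableSet_Ioi] with t ht
    rw [Real.norm_eq_abs]
    exact hFbound a b t (le_of_lt ht)
  -- `⟪Qinf a, b⟫` as an integral
  have hQinner : ∀ a b : H, ⟪Qinf a, b⟫ = ∫ t in Set.Ioi (0 : ℝ), F a b t := by
    intro a b
    set G : ℝ → H := fun t => NormedSpace.exp (t • C) (Q (NormedSpace.exp (t • A) a))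
      with hG
    have hGcont : Continuous G := by
      apply Continuous.clm_apply (NormedSpace.exp_continuous.comp (by fun_prop))
      exact Q.continuous.comp (hexpcont.clm_apply continuous_const)
    have hGint : IntegrableOn G (Set.Ioi 0) := by
      apply Integrable.mono' ((hexpint.const_mul (M₀ * M₀ * ‖Q‖ * ‖a‖)))
        (hGcont.aestronglyMeasurable.restrict)
      filter_upwards [ae_restrict_mem measurableSet_Ioi] with t ht
      have ht' : (0 : ℝ) ≤ t := le_of_lt ht
      have h1 : ‖NormedSpace.exp (t • A) a‖ ≤ M₀ * Real.exp (-ι * t) * ‖a‖ :=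
        ((NormedSpace.exp (t • A)).le_opNorm a).trans
          (mul_le_mul_of_nonneg_right (hnormA t ht') (norm_nonneg a))
      calc ‖G t‖ ≤ ‖NormedSpace.exp (t • C)‖ * ‖Q (NormedSpace.exp (t • A) a)‖ :=
            (NormedSpace.exp (t • C)).le_opNorm _
        _ ≤ (M₀ * Real.exp (-ι * t)) * (‖Q‖ * (M₀ * Real.exp (-ι * t) * ‖a‖)) := by
            apply mul_le_mul (hnormC t ht') _ (norm_nonneg _) (by positivity)
            exact (Q.le_opNorm _).trans (mul_le_mul_of_nonneg_left h1 (norm_nonneg Q))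
        _ = M₀ * M₀ * ‖Q‖ * ‖a‖ * (Real.exp (-ι * t) * Real.exp (-ι * t)) := by ring
        _ = M₀ * M₀ * ‖Q‖ * ‖a‖ * Real.exp (-(2 * ι) * t) := by rw [hexptwo t]
    have h1 : Qinf a = ∫ t in Set.Ioi (0 : ℝ), G t := by
      rw [hQinf a]
      apply setIntegral_congr_fun measurableSet_Ioi
      intro t ht
      show S t (Q ((ContinuousLinearMap.adjoint (S t)) a))
          = NormedSpace.exp (t • C) (Q (NormedSpace.exp (t • A) a))
      rw [hSexp t (le_of_lt ht), hexp_adj]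
    have h2 : ⟪b, Qinf a⟫ = ∫ t in Set.Ioi (0 : ℝ), ⟪b, G t⟫ := by
      rw [h1]; exact (integral_inner (𝕜 := ℝ) hGint b).symm
    rw [real_inner_comm (Qinf a) b] at h2
    rw [h2]
    apply setIntegral_congr_fun measurableSet_Ioi
    intro t _
    show ⟪b, NormedSpace.exp (t • C) (Q (NormedSpace.exp (t • A) a))⟫
        = ⟪Q (NormedSpace.exp (t • A) a), NormedSpace.exp (t • A) b⟫
    rw [real_inner_comm, ← hexp_adj t, ContinuousLinearMap.adjoint_inner_right]
  -- derivative of F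
  have hFderiv : ∀ a b : H, ∀ t : ℝ,
      HasDerivAt (F a b) (F (A a) b t + F a (A b) t) t := by
    intro a b t
    have hu : ∀ z : H, HasDerivAt (fun s : ℝ => NormedSpace.exp (s • A) z)
        (NormedSpace.exp (t • A) (A z)) t := by
      intro z
      have := (hasDerivAt_exp_smul_const A t).clm_apply (hasDerivAt_const t z)
      simpa [ContinuousLinearMap.mul_apply] using this
    have hQu : HasDerivAt (fun s : ℝ => Q (NormedSpace.exp (s • A) a))
        (Q (NormedSpace.exp (t • A) (A a))) t :=
      Q.hasFDerivAt.comp_hasDerivAt t (hu a)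
    have := hQu.inner ℝ (hu b)
    show HasDerivAt (fun t : ℝ =>
      ⟪Q (NormedSpace.exp (t • A) a), NormedSpace.exp (t • A) b⟫)
      (⟪Q (NormedSpace.exp (t • A) (A a)), NormedSpace.exp (t • A) b⟫
        + ⟪Q (NormedSpace.exp (t • A) a), NormedSpace.exp (t • A) (A b)⟫) t
    exact this.congr_deriv (by rw [add_comm])
  -- F tends to zero at infinity
  have hFtend : ∀ a b : H, Filter.Tendsto (F a b) Filter.atTop (nhds 0) := by
    intro a b
    rw [tendsto_zero_iff_abs_tendsto_zero]
    have hg : Filter.Tendsto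
        (fun t : ℝ => M₀ * M₀ * ‖Q‖ * (‖a‖ * ‖b‖) * Real.exp (-(2 * ι) * t))
        Filter.atTop (nhds 0) := by
      have h1 : Filter.Tendsto (fun t : ℝ => -(2 * ι) * t) Filter.atTop Filter.atBot :=
        (Filter.tendsto_const_mul_atBot_of_neg (by linarith : -(2 * ι) < (0:ℝ))).mpr
          Filter.tendsto_id
      have h2 : Filter.Tendsto (fun t : ℝ => Real.exp (-(2 * ι) * t))
          Filter.atTop (nhds 0) := Real.tendsto_exp_atBot.comp h1
      simpa [mul_zero] using h2.const_mul (M₀ * M₀ * ‖Q‖ * (‖a‖ * ‖b‖))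
    apply squeeze_zero' _ _ hg
    · filter_upwards with t
      exact abs_nonneg _
    · filter_upwards [Filter.eventually_ge_atTop (0 : ℝ)] with t ht
      exact hFbound a b t ht
  -- the weak Lyapunov identity
  have key : ∀ a b : H, ⟪Qinf (A a), b⟫ + ⟪Qinf a, A b⟫ = -⟪Q a, b⟫ := by
    intro a b
    have hint := (hFint (A a) b).add (hFint a (A b))
    have hF0 : F a b 0 = ⟪Q a, b⟫ := by
      show ⟪Q (NormedSpace.exp ((0:ℝ) • A) a), NormedSpace.exp ((0:ℝ) • A) b⟫ = ⟪Q a, b⟫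
      simp
    have hftc := integral_Ioi_of_hasDerivAt_of_tendsto (a := (0:ℝ)) (f := F a b)
        (f' := fun t => F (A a) b t + F a (A b) t) (m := 0)
        ((hFcont a b).continuousWithinAt) (fun t _ => hFderiv a b t) hint (hFtend a b)
    rw [integral_add (hFint (A a) b) (hFint a (A b)), zero_sub, hF0] at hftc
    rw [hQinner (A a) b, hQinner a (A b)]
    exact hftc
  -- the operator Lyapunov equation
  have hLyap : C ∘L Qinf + Qinf ∘L A = -Q := by
    ext a
    apply ext_inner_right ℝ
    intro b
    simp only [ContinuousLinearMap.add_apply, ContinuousLinearMap.comp_apply,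
      ContinuousLinearMap.neg_apply, inner_add_left, inner_neg_left]
    have h1 : ⟪C (Qinf a), b⟫ = ⟪Qinf a, A b⟫ := by
      rw [hA, real_inner_comm, ContinuousLinearMap.adjoint_inner_right, real_inner_comm]
    rw [h1, add_comm]
    exact key a b
  -- final algebra
  set D := ContinuousLinearMap.adjoint Cinv with hD
  have hCC : Cinv ∘L C = -1 := by
    have : Cinv ∘L (-C) = 1 := hCinv2
    rw [ContinuousLinearMap.comp_neg] at this
    rw [← neg_neg (Cinv ∘L C), this]
  have hAD : A ∘L D = -1 := by
    rw [hA, hD, ← ContinuousLinearMap.adjoint_comp, hCC, ← ContinuousLinearMap.star_eq_adjoint]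
    simp
  have e2 : -(Qinf ∘L D) - Cinv ∘L Qinf = -((Cinv ∘L Q) ∘L D) := by
    calc -(Qinf ∘L D) - Cinv ∘L Qinf
        = (Cinv ∘L C) ∘L (Qinf ∘L D) + (Cinv ∘L Qinf) ∘L (A ∘L D) := by
          rw [hCC, hAD]
          simp [sub_eq_add_neg, add_comm, ContinuousLinearMap.one_def,
            ContinuousLinearMap.comp_id, ContinuousLinearMap.id_comp]
      _ = Cinv ∘L ((C ∘L Qinf + Qinf ∘L A) ∘L D) := by
          ext x
          simp [ContinuousLinearMap.comp_apply, ContinuousLinearMap.add_apply]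
      _ = Cinv ∘L ((-Q) ∘L D) := by rw [hLyap]
      _ = -((Cinv ∘L Q) ∘L D) := by
          ext x
          simp [ContinuousLinearMap.comp_apply]
  have goal1 : Cinv ∘L Qinf = (Cinv ∘L Q) ∘L D - Qinf ∘L D := by
    have h := congrArg Neg.neg e2
    rw [neg_neg, neg_sub] at h
    rw [← h]
    abel
  refine ⟨goal1, ?_⟩
  rw [goal1]
  congr 1
  abel
end

section
/- Suppose a sequence of random variables satisfies E‖X^ε − X⁰‖ ≲ ε^{β} and E‖X^ε − X^η‖ ≲ ε^{-c} |ε − η|^{κ} for 0 < ε < η ≤ 1 with constants β, κ, c > 0. Then there exists κ' > 0 such that E‖X^ε − X^η‖ ≲ |ε − η|^{κ'} for all ε, η ∈ [0,1]. -/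
open MeasureTheory

/-- Interpolation of rates: if a family of Banach-space-valued random variables satisfies
`E‖X^ε − X⁰‖ ≲ ε^β` and `E‖X^ε − X^η‖ ≲ ε^{-c}|ε − η|^κ` for `0 < ε < η ≤ 1`, then there is
`κ' > 0` with `E‖X^ε − X^η‖ ≲ |ε − η|^{κ'}` for all `ε, η ∈ [0,1]`. -/
theorem stmt17 {V Ω : Type*}
    [NormedAddCommGroup V] [MeasurableSpace Ω]
    (P : Measure Ω) [IsProbabilityMeasure P]
    (X : ℝ → Ω → V)
    (hmeas : ∀ ε : ℝ, AEStronglyMeasurable (X ε) P)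
    (hint : ∀ ε ∈ Set.Icc (0 : ℝ) 1, Integrable (fun ω => ‖X ε ω‖) P)
    (β κ c : ℝ) (hβ : 0 < β) (hκ : 0 < κ) (hc : 0 < c)
    (C₁ C₂ : ℝ)
    (hrate : ∀ ε ∈ Set.Ioc (0 : ℝ) 1,
      ∫ ω, ‖X ε ω - X 0 ω‖ ∂P ≤ C₁ * ε ^ β)
    (hdiff : ∀ ε η : ℝ, 0 < ε → ε < η → η ≤ 1 →
      ∫ ω, ‖X ε ω - X η ω‖ ∂P ≤ C₂ * ε ^ (-c) * |ε - η| ^ κ) :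
    ∃ κ' : ℝ, 0 < κ' ∧ ∃ C₃ : ℝ, ∀ ε ∈ Set.Icc (0 : ℝ) 1, ∀ η ∈ Set.Icc (0 : ℝ) 1,
      ∫ ω, ‖X ε ω - X η ω‖ ∂P ≤ C₃ * |ε - η| ^ κ' := by
  set γ₀ : ℝ := κ / (2 * c) with hγ₀def
  have hγ₀ : 0 < γ₀ := by positivity
  set m : ℝ := min γ₀ 1 with hmdef
  have hm : 0 < m := lt_min hγ₀ one_pos
  set κ' : ℝ := min (min (κ / 2) β) (m * β) with hκ'def
  have hκ'pos : 0 < κ' := lt_min (lt_min (by positivity) hβ) (by positivity)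
  have h2β : (0:ℝ) < (2:ℝ) ^ β := Real.rpow_pos_of_pos two_pos β
  set C₃ : ℝ := |C₁| * (2 + 2 ^ β) + |C₂| with hC₃def
  have hC₃0 : 0 ≤ C₃ := by positivity
  have hC₂le : |C₂| ≤ C₃ := by nlinarith [abs_nonneg C₁, abs_nonneg C₂]
  have hC₁le : |C₁| ≤ C₃ := by nlinarith [abs_nonneg C₁, abs_nonneg C₂]
  have hC₁le' : |C₁| * (1 + 2 ^ β) ≤ C₃ := by nlinarith [abs_nonneg C₁, abs_nonneg C₂]
  refine ⟨κ', hκ'pos, C₃, ?_⟩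
  -- integrability of differences
  have hI : ∀ a ∈ Set.Icc (0:ℝ) 1, ∀ b ∈ Set.Icc (0:ℝ) 1,
      Integrable (fun ω => ‖X a ω - X b ω‖) P := by
    intro a ha b hb
    refine ((hint a ha).add (hint b hb)).mono (((hmeas a).sub (hmeas b)).norm) ?_
    filter_upwards with ω
    simp only [norm_norm]
    calc ‖X a ω - X b ω‖ ≤ ‖X a ω‖ + ‖X b ω‖ := norm_sub_le _ _
      _ ≤ ‖‖X a ω‖ + ‖X b ω‖‖ := le_abs_self _
  have h0mem : (0:ℝ) ∈ Set.Icc (0:ℝ) 1 := ⟨le_refl 0, zero_le_one⟩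
  -- main claim for ε < η
  have key : ∀ ε ∈ Set.Icc (0:ℝ) 1, ∀ η ∈ Set.Icc (0:ℝ) 1, ε < η →
      ∫ ω, ‖X ε ω - X η ω‖ ∂P ≤ C₃ * (η - ε) ^ κ' := by
    intro ε hε η hη hlt
    set δ : ℝ := η - ε with hδdef
    have hδ0 : 0 < δ := by simp [hδdef]; linarith
    have hδ1 : δ ≤ 1 := by have := hε.1; have := hη.2; simp [hδdef]; linarith
    have hδκ'0 : 0 ≤ δ ^ κ' := Real.rpow_nonneg hδ0.le _
    have habs : |ε - η| = δ := by rw [abs_of_neg (by linarith)]; ring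
    -- monotonicity in exponent
    have hmono : ∀ a : ℝ, κ' ≤ a → δ ^ a ≤ δ ^ κ' := fun a ha =>
      Real.rpow_le_rpow_of_exponent_ge hδ0 hδ1 ha
    rcases eq_or_lt_of_le hε.1 with hε0 | hε0
    · -- ε = 0 : use hrate
      have hηIoc : η ∈ Set.Ioc (0:ℝ) 1 := ⟨by linarith, hη.2⟩
      have h1 := hrate η hηIoc
      have hηδ : η = δ := by rw [hδdef, ← hε0]; ring
      calc ∫ ω, ‖X ε ω - X η ω‖ ∂P = ∫ ω, ‖X η ω - X 0 ω‖ ∂P := by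
            rw [← hε0]; simp [norm_sub_rev]
        _ ≤ C₁ * η ^ β := h1
        _ ≤ |C₁| * δ ^ β := by
            rw [hηδ]
            exact mul_le_mul_of_nonneg_right (le_abs_self _) (Real.rpow_nonneg hδ0.le _)
        _ ≤ |C₁| * δ ^ κ' := mul_le_mul_of_nonneg_left
            (hmono β (le_trans (min_le_left _ _) (min_le_right _ _))) (abs_nonneg _)
        _ ≤ C₃ * δ ^ κ' := mul_le_mul_of_nonneg_right hC₁le hδκ'0
    · -- 0 < ε
      rcases le_or_gt (δ ^ γ₀) ε with hcase | hcase
      · -- big ε : use hdiff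
        have hδγ₀ : (0:ℝ) < δ ^ γ₀ := Real.rpow_pos_of_pos hδ0 _
        have h1 := hdiff ε η hε0 hlt hη.2
        have h2 : ε ^ (-c) ≤ (δ ^ γ₀) ^ (-c) :=
          Real.rpow_le_rpow_of_nonpos hδγ₀ hcase (by linarith)
        have h3 : (δ ^ γ₀) ^ (-c) = δ ^ (-(κ/2)) := by
          rw [← Real.rpow_mul hδ0.le]
          congr 1
          field_simp [hγ₀def]
          rw [hγ₀def]; field_simp
        have h4 : δ ^ (-(κ/2)) * δ ^ κ = δ ^ (κ/2) := by
          rw [← Real.rpow_add hδ0]; congr 1; ring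
        calc ∫ ω, ‖X ε ω - X η ω‖ ∂P ≤ C₂ * ε ^ (-c) * |ε - η| ^ κ := h1
          _ = C₂ * (ε ^ (-c) * δ ^ κ) := by rw [habs]; ring
          _ ≤ |C₂| * (ε ^ (-c) * δ ^ κ) := mul_le_mul_of_nonneg_right (le_abs_self _)
              (by positivity)
          _ ≤ |C₂| * (δ ^ (-(κ/2)) * δ ^ κ) := by
              rw [← h3]
              exact mul_le_mul_of_nonneg_left
                (mul_le_mul_of_nonneg_right h2 (Real.rpow_nonneg hδ0.le _)) (abs_nonneg _)
          _ = |C₂| * δ ^ (κ/2) := by rw [h4]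
          _ ≤ |C₂| * δ ^ κ' := mul_le_mul_of_nonneg_left
              (hmono _ (le_trans (min_le_left _ _) (min_le_left _ _))) (abs_nonneg _)
          _ ≤ C₃ * δ ^ κ' := mul_le_mul_of_nonneg_right hC₂le hδκ'0
      · -- small ε : triangle inequality through X 0
        have hεIoc : ε ∈ Set.Ioc (0:ℝ) 1 := ⟨hε0, hε.2⟩
        have hηIoc : η ∈ Set.Ioc (0:ℝ) 1 := ⟨lt_trans hε0 hlt, hη.2⟩
        have h1 := hrate ε hεIoc
        have h2 := hrate η hηIoc
        have htri : ∫ ω, ‖X ε ω - X η ω‖ ∂P ≤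
            ∫ ω, ‖X ε ω - X 0 ω‖ ∂P + ∫ ω, ‖X η ω - X 0 ω‖ ∂P := by
          rw [← integral_add (hI ε hε 0 h0mem) (hI η hη 0 h0mem)]
          refine integral_mono (hI ε hε η hη)
            ((hI ε hε 0 h0mem).add (hI η hη 0 h0mem)) (fun ω => ?_)
          calc ‖X ε ω - X η ω‖ = ‖(X ε ω - X 0 ω) - (X η ω - X 0 ω)‖ := by abel_nf
            _ ≤ ‖X ε ω - X 0 ω‖ + ‖X η ω - X 0 ω‖ := norm_sub_le _ _
        -- bounds on ε^β and η^β
        have hδm : δ ^ γ₀ ≤ δ ^ m := Real.rpow_le_rpow_of_exponent_ge hδ0 hδ1 (min_le_left _ _)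
        have hδm1 : δ ≤ δ ^ m := by
          calc δ = δ ^ (1:ℝ) := (Real.rpow_one δ).symm
            _ ≤ δ ^ m := Real.rpow_le_rpow_of_exponent_ge hδ0 hδ1 (min_le_right _ _)
        have hεb : ε ^ β ≤ δ ^ (m * β) := by
          calc ε ^ β ≤ (δ ^ m) ^ β := Real.rpow_le_rpow hε0.le
                (le_trans hcase.le hδm) hβ.le
            _ = δ ^ (m * β) := by rw [← Real.rpow_mul hδ0.le]
        have hηle : η ≤ 2 * δ ^ m := by
          have : η = δ + ε := by rw [hδdef]; ring
          rw [this]; linarith [le_trans hcase.le hδm]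
        have hηb : η ^ β ≤ 2 ^ β * δ ^ (m * β) := by
          calc η ^ β ≤ (2 * δ ^ m) ^ β := Real.rpow_le_rpow (by linarith) hηle hβ.le
            _ = 2 ^ β * (δ ^ m) ^ β := Real.mul_rpow (by norm_num)
                (Real.rpow_nonneg hδ0.le _)
            _ = 2 ^ β * δ ^ (m * β) := by rw [← Real.rpow_mul hδ0.le]
        have hmδ : δ ^ (m * β) ≤ δ ^ κ' := hmono _ (min_le_right _ _)
        calc ∫ ω, ‖X ε ω - X η ω‖ ∂P
            ≤ ∫ ω, ‖X ε ω - X 0 ω‖ ∂P + ∫ ω, ‖X η ω - X 0 ω‖ ∂P := htri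
          _ ≤ C₁ * ε ^ β + C₁ * η ^ β := add_le_add h1 h2
          _ ≤ |C₁| * ε ^ β + |C₁| * η ^ β := add_le_add
              (mul_le_mul_of_nonneg_right (le_abs_self _) (Real.rpow_nonneg hε0.le _))
              (mul_le_mul_of_nonneg_right (le_abs_self _) (Real.rpow_nonneg (by linarith) _))
          _ ≤ |C₁| * δ ^ κ' + |C₁| * (2 ^ β * δ ^ κ') := add_le_add
              (mul_le_mul_of_nonneg_left (le_trans hεb hmδ) (abs_nonneg _))
              (mul_le_mul_of_nonneg_left (le_trans hηb
                (mul_le_mul_of_nonneg_left hmδ h2β.le)) (abs_nonneg _))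
          _ = |C₁| * (1 + 2 ^ β) * δ ^ κ' := by ring
          _ ≤ C₃ * δ ^ κ' := mul_le_mul_of_nonneg_right hC₁le' hδκ'0
  -- conclude using symmetry
  intro ε hε η hη
  rcases lt_trichotomy ε η with h | h | h
  · have := key ε hε η hη h
    rwa [abs_of_neg (by linarith), neg_sub]
  · subst h
    simp only [sub_self, norm_zero, abs_zero, integral_zero]
    rw [Real.zero_rpow (ne_of_gt hκ'pos)]
    simp
  · have := key η hη ε hε h
    rw [abs_of_pos (by linarith : (0:ℝ) < ε - η)]
    calc ∫ ω, ‖X ε ω - X η ω‖ ∂P = ∫ ω, ‖X η ω - X ε ω‖ ∂P := by simp [norm_sub_rev]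
      _ ≤ C₃ * (ε - η) ^ κ' := this
end
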